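/- The derivative at t = 0 of t ↦ L(μ, Ψ + t·H) vanishes for every symmetric r×r real matrix H if and only if N·Ψ = ∑_{n=1}^N w_n x̃_n x̃_nᵀ; i.e., the stationary points of the scatter parameter are exactly the solutions of the weighted sample-scatter fixed-point equation Ψ = (1/N)·∑_{n=1}^N w_n x̃_n x̃_nᵀ. -/

import Mathlib

open Matrix BigOperators

open Polynomial


attribute [local instance] Matrix.linftyOpNormedAddCommGroup Matrix.linftyOpNormedRing
  Matrix.linftyOpNormedSpace Matrix.linftyOpNormedAlgebra

private lemma hasDerivAt_det_one_add_smul' {r : ℕ} (A : Matrix (Fin r) (Fin r) ℝ) :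
    HasDerivAt (fun t : ℝ => (1 + t • A).det) A.trace 0 := by
  have hfun : (fun t : ℝ => (1 + t • A).det) =
      fun t : ℝ => 1 + A.trace * t +
        ((1 + (X : ℝ[X]) • A.map C).det).divX.divX.eval t * t ^ 2 := by
    funext t; exact Matrix.det_one_add_smul t A
  rw [hfun]
  set q := ((1 + (X : ℝ[X]) • A.map C).det).divX.divX with hq
  have h1 : HasDerivAt (fun t : ℝ => q.eval t * t ^ 2)
      (q.derivative.eval 0 * 0 ^ 2 + q.eval 0 * ((2:ℕ) * 0 ^ 1)) 0 :=
    (q.hasDerivAt 0).mul (hasDerivAt_pow 2 0)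
  have h2 : HasDerivAt (fun t : ℝ => 1 + A.trace * t) A.trace 0 := by
    simpa using ((hasDerivAt_id (0:ℝ)).const_mul A.trace).const_add 1
  simpa using h2.fun_add h1

private def quadL {r : ℕ} (v : Fin r → ℝ) : Matrix (Fin r) (Fin r) ℝ →ₗ[ℝ] ℝ where
  toFun M := v ⬝ᵥ (M *ᵥ v)
  map_add' M M' := by simp [Matrix.add_mulVec, dotProduct_add]
  map_smul' c M := by simp [Matrix.smul_mulVec, dotProduct_smul]

private lemma dot_eq_trace {r : ℕ} (A : Matrix (Fin r) (Fin r) ℝ) (u v : Fin r → ℝ) :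
    u ⬝ᵥ (A *ᵥ v) = (A * vecMulVec v u).trace := by
  simp only [Matrix.trace, Matrix.diag, Matrix.mul_apply, vecMulVec_apply, dotProduct,
    Matrix.mulVec, Finset.mul_sum]
  refine Finset.sum_congr rfl fun i _ => Finset.sum_congr rfl fun j _ => by ring


/-- The essential part of the log-likelihood of `N` observations from the multivariate
`t_ν` distribution with location `μ` and scatter matrix `Ψ`. -/
noncomputable def tLogLik (r N : ℕ) (ν : ℝ) (x : Fin N → Fin r → ℝ)
    (μ : Fin r → ℝ) (Ψ : Matrix (Fin r) (Fin r) ℝ) : ℝ :=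
  -((N : ℝ) / 2) * Real.log Ψ.det
    - ((ν + r) / 2) * ∑ n, Real.log (1 + ((x n - μ) ⬝ᵥ (Ψ⁻¹ *ᵥ (x n - μ))) / ν)



private lemma scalar_alg {ν d p c : ℝ} (hν : 0 < ν) (hd : 0 ≤ d) (hc : c = p / (ν + d)) (q : ℝ) :
    (p / 2) * (-q / ν / (1 + d / ν)) = -(1/2) * (c * q) := by
  have h1 : (0:ℝ) < ν + d := by linarith
  subst hc
  rw [show (1:ℝ) + d / ν = (ν + d) / ν by field_simp]
  field_simp

private lemma main_deriv {r N : ℕ} (ν : ℝ) (hν : 0 < ν)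
    (x : Fin N → Fin r → ℝ) (μ : Fin r → ℝ)
    (Ψ : Matrix (Fin r) (Fin r) ℝ) (hΨ : Ψ.PosDef)
    (w : Fin N → ℝ)
    (hw : ∀ n, w n = (ν + r) / (ν + (x n - μ) ⬝ᵥ (Ψ⁻¹ *ᵥ (x n - μ))))
    (H : Matrix (Fin r) (Fin r) ℝ) :
    HasDerivAt (fun t : ℝ => tLogLik r N ν x μ (Ψ + t • H))
      (-(1/2) * ((Ψ⁻¹ * H * Ψ⁻¹) *
        ((N : ℝ) • Ψ - ∑ n, w n • vecMulVec (x n - μ) (x n - μ))).trace) 0 := by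
  have hdet0 : 0 < Ψ.det := hΨ.det_pos
  have hU : IsUnit Ψ := (Matrix.isUnit_iff_isUnit_det Ψ).2 hdet0.ne'.isUnit
  set S : Matrix (Fin r) (Fin r) ℝ := Ψ⁻¹ * H * Ψ⁻¹ with hS
  have hδnn : ∀ n, 0 ≤ (x n - μ) ⬝ᵥ (Ψ⁻¹ *ᵥ (x n - μ)) := by
    intro n
    simpa only [star_trivial] using hΨ.inv.posSemidef.dotProduct_mulVec_nonneg (x n - μ)
  -- curve
  have hc : HasDerivAt (fun t : ℝ => Ψ + t • H) H 0 := by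
    have h := ((hasDerivAt_id (0 : ℝ)).smul_const H).const_add Ψ
    convert h using 1
    · rfl
    · rfl
    · rfl
    · rfl
    · rw [one_smul]
  -- determinant
  have hkey : ∀ t : ℝ, Ψ + t • H = Ψ * (1 + t • (Ψ⁻¹ * H)) := by
    intro t
    rw [mul_add, mul_one, mul_smul_comm, ← mul_assoc, Matrix.mul_nonsing_inv Ψ hdet0.ne'.isUnit,
      one_mul]
  have hdetc : HasDerivAt (fun t : ℝ => (Ψ + t • H).det) (Ψ.det * (Ψ⁻¹ * H).trace) 0 := by
    have : (fun t : ℝ => (Ψ + t • H).det) = fun t : ℝ => Ψ.det * (1 + t • (Ψ⁻¹ * H)).det := by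
      funext t; rw [hkey t, Matrix.det_mul]
    rw [this]
    exact (hasDerivAt_det_one_add_smul' _).const_mul Ψ.det
  have hdne : (Ψ + (0:ℝ) • H).det ≠ 0 := by simpa using hdet0.ne'
  have hlogdet : HasDerivAt (fun t : ℝ => Real.log (Ψ + t • H).det) ((Ψ⁻¹ * H).trace) 0 := by
    have h := hdetc.log hdne
    convert h using 1
    rw [show Ψ + (0:ℝ) • H = Ψ by simp]
    field_simp
  -- inverse curve
  have hinv : HasDerivAt (fun t : ℝ => (Ψ + t • H)⁻¹) (-S) 0 := by
    have h0 : Ψ + (0:ℝ) • H = (hU.unit : Matrix (Fin r) (Fin r) ℝ) := by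
      simp [hU.unit_spec]
    have hf : HasFDerivAt Ring.inverse
        (-ContinuousLinearMap.mulLeftRight ℝ _ (↑hU.unit⁻¹) (↑hU.unit⁻¹))
        (Ψ + (0:ℝ) • H) := by
      rw [h0]; exact hasFDerivAt_ringInverse hU.unit
    have h := hf.comp_hasDerivAt 0 hc
    simp only [Function.comp_def] at h
    have hcoe : ((hU.unit⁻¹ : (Matrix (Fin r) (Fin r) ℝ)ˣ) : Matrix (Fin r) (Fin r) ℝ) = Ψ⁻¹ := by
      rw [Matrix.coe_units_inv, hU.unit_spec]
    have h2 : HasDerivAt (fun t : ℝ => (Ψ + t • H)⁻¹)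
        ((-ContinuousLinearMap.mulLeftRight ℝ _ (↑hU.unit⁻¹) (↑hU.unit⁻¹)) H) 0 :=
      h.congr_of_eventuallyEq
        (Filter.Eventually.of_forall fun t => Matrix.nonsing_inv_eq_ringInverse _)
    convert h2 using 1
    simp [hcoe, hS, mul_assoc]
  -- quadratic forms
  have hquad : ∀ n, HasDerivAt (fun t : ℝ => (x n - μ) ⬝ᵥ ((Ψ + t • H)⁻¹ *ᵥ (x n - μ)))
      (-((x n - μ) ⬝ᵥ (S *ᵥ (x n - μ)))) 0 := by
    intro n
    have h := ((quadL (x n - μ)).toContinuousLinearMap.hasFDerivAt).comp_hasDerivAt 0 hinv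
    convert h using 1
    · rfl
    · rfl
    · rfl
    · show -((x n - μ) ⬝ᵥ (S *ᵥ (x n - μ))) = quadL (x n - μ) (-S)
      simp [quadL, Matrix.neg_mulVec]
      ring
  -- log terms
  have hne1 : ∀ n, (1 : ℝ) + ((x n - μ) ⬝ᵥ (Ψ⁻¹ *ᵥ (x n - μ))) / ν ≠ 0 := by
    intro n
    have h1 : 0 ≤ ((x n - μ) ⬝ᵥ (Ψ⁻¹ *ᵥ (x n - μ))) / ν := div_nonneg (hδnn n) hν.le
    have : (0:ℝ) < 1 + ((x n - μ) ⬝ᵥ (Ψ⁻¹ *ᵥ (x n - μ))) / ν := by linarith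
    exact this.ne'
  have hlog : ∀ n, HasDerivAt
      (fun t : ℝ => Real.log (1 + ((x n - μ) ⬝ᵥ ((Ψ + t • H)⁻¹ *ᵥ (x n - μ))) / ν))
      ((-((x n - μ) ⬝ᵥ (S *ᵥ (x n - μ))) / ν) /
        (1 + ((x n - μ) ⬝ᵥ (Ψ⁻¹ *ᵥ (x n - μ))) / ν)) 0 := by
    intro n
    have hin : HasDerivAt
        (fun t : ℝ => 1 + ((x n - μ) ⬝ᵥ ((Ψ + t • H)⁻¹ *ᵥ (x n - μ))) / ν)
        (-((x n - μ) ⬝ᵥ (S *ᵥ (x n - μ))) / ν) 0 := ((hquad n).div_const ν).const_add 1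
    have h := hin.log (by
      rw [show Ψ + (0:ℝ) • H = Ψ by simp]
      exact hne1 n)
    convert h using 2
    rw [show Ψ + (0:ℝ) • H = Ψ by simp]
  have hsum : HasDerivAt
      (fun t : ℝ => ∑ n, Real.log (1 + ((x n - μ) ⬝ᵥ ((Ψ + t • H)⁻¹ *ᵥ (x n - μ))) / ν))
      (∑ n, (-((x n - μ) ⬝ᵥ (S *ᵥ (x n - μ))) / ν) /
        (1 + ((x n - μ) ⬝ᵥ (Ψ⁻¹ *ᵥ (x n - μ))) / ν)) 0 := HasDerivAt.fun_sum fun n _ => hlog n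
  have hfinal := (hlogdet.const_mul (-((N : ℝ)/2))).sub (hsum.const_mul ((ν + r)/2))
  have hfun : (fun t : ℝ => tLogLik r N ν x μ (Ψ + t • H)) =
      fun t : ℝ => -((N : ℝ)/2) * Real.log (Ψ + t • H).det -
        (ν + r)/2 * ∑ n, Real.log (1 + ((x n - μ) ⬝ᵥ ((Ψ + t • H)⁻¹ *ᵥ (x n - μ))) / ν) := rfl
  rw [hfun]
  convert hfinal using 1
  · rfl
  · rfl
  · rfl
  -- algebra on derivative values
  have htr1 : S * Ψ = Ψ⁻¹ * H := by
    rw [hS, mul_assoc, Matrix.nonsing_inv_mul Ψ hdet0.ne'.isUnit, mul_one]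
  have htrace : (S * ((N : ℝ) • Ψ - ∑ n, w n • vecMulVec (x n - μ) (x n - μ))).trace =
      (N : ℝ) * (Ψ⁻¹ * H).trace - ∑ n, w n * ((x n - μ) ⬝ᵥ (S *ᵥ (x n - μ))) := by
    rw [mul_sub, Matrix.mul_smul, Matrix.mul_sum]
    rw [Matrix.trace_sub, Matrix.trace_smul, htr1, Matrix.trace_sum]
    simp only [smul_eq_mul]
    congr 1
    refine Finset.sum_congr rfl fun n _ => ?_
    rw [mul_smul_comm, Matrix.trace_smul, smul_eq_mul, ← dot_eq_trace]
  rw [htrace]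
  have hsum2 : ((ν + (r:ℝ))/2) * ∑ n, (-((x n - μ) ⬝ᵥ (S *ᵥ (x n - μ))) / ν) /
        (1 + ((x n - μ) ⬝ᵥ (Ψ⁻¹ *ᵥ (x n - μ))) / ν) =
      ∑ n, -(1/2) * (w n * ((x n - μ) ⬝ᵥ (S *ᵥ (x n - μ)))) := by
    rw [Finset.mul_sum]
    exact Finset.sum_congr rfl fun n _ => scalar_alg hν (hδnn n) (hw n) _
  rw [hsum2, ← Finset.mul_sum]
  ring

/-- the derivative at `t = 0` of `t ↦ L(μ, Ψ + t•H)` vanishes for every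
symmetric `H` iff the weighted sample-scatter fixed-point equation
`N • Ψ = ∑ₙ wₙ x̃ₙ x̃ₙᵀ` holds. -/
theorem scatter_stationary_iff_fixed_point
    (r N : ℕ) (hr : 1 ≤ r) (hN : 1 ≤ N) (ν : ℝ) (hν : 0 < ν)
    (x : Fin N → Fin r → ℝ) (μ : Fin r → ℝ)
    (Ψ : Matrix (Fin r) (Fin r) ℝ) (hΨ : Ψ.PosDef)
    (δ : Fin N → ℝ)
    (hδ : ∀ n, δ n = (x n - μ) ⬝ᵥ (Ψ⁻¹ *ᵥ (x n - μ)))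
    (w : Fin N → ℝ)
    (hw : ∀ n, w n = (ν + r) / (ν + δ n)) :
    (∀ H : Matrix (Fin r) (Fin r) ℝ, H.IsSymm →
        HasDerivAt (fun t : ℝ => tLogLik r N ν x μ (Ψ + t • H)) 0 0) ↔
      (N : ℝ) • Ψ = ∑ n, w n • vecMulVec (x n - μ) (x n - μ) := by
  have hdet0 : 0 < Ψ.det := hΨ.det_pos
  have hUdet : IsUnit Ψ.det := hdet0.ne'.isUnit
  have hw' : ∀ n, w n = (ν + r) / (ν + (x n - μ) ⬝ᵥ (Ψ⁻¹ *ᵥ (x n - μ))) := by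
    intro n; rw [hw n, hδ n]
  have hΨsym : Ψᵀ = Ψ := by
    ext i j
    have h := congr_fun (congr_fun hΨ.isHermitian i) j
    simpa [Matrix.conjTranspose_apply] using h
  set M : Matrix (Fin r) (Fin r) ℝ :=
    (N : ℝ) • Ψ - ∑ n, w n • vecMulVec (x n - μ) (x n - μ) with hM
  have hvsym : ∀ n, (vecMulVec (x n - μ) (x n - μ))ᵀ = vecMulVec (x n - μ) (x n - μ) := by
    intro n; ext i j; simp [vecMulVec_apply, mul_comm]
  have hMsym : Mᵀ = M := by
    rw [hM, Matrix.transpose_sub, Matrix.transpose_smul, hΨsym, Matrix.transpose_sum]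
    congr 1
    exact Finset.sum_congr rfl fun n _ => by rw [Matrix.transpose_smul, hvsym n]
  constructor
  · intro h
    have hH0sym : (Ψ * M * Ψ).IsSymm := by
      show (Ψ * M * Ψ)ᵀ = Ψ * M * Ψ
      rw [Matrix.transpose_mul, Matrix.transpose_mul, hΨsym, hMsym, mul_assoc]
    have h0 := (main_deriv ν hν x μ Ψ hΨ w hw' (Ψ * M * Ψ)).unique (h (Ψ * M * Ψ) hH0sym)
    have hS0 : Ψ⁻¹ * (Ψ * M * Ψ) * Ψ⁻¹ = M := by
      simp only [← mul_assoc]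
      rw [Matrix.nonsing_inv_mul Ψ hUdet, one_mul, mul_assoc,
        Matrix.mul_nonsing_inv Ψ hUdet, mul_one]
    rw [hS0] at h0
    have htr0 : (M * M).trace = 0 := by linarith [h0.symm]
    have hMsym' : ∀ i j, M j i = M i j := by
      intro i j
      have := congr_fun (congr_fun hMsym i) j
      simpa using this
    have htr : (M * M).trace = ∑ i, ∑ j, M i j ^ 2 := by
      simp only [Matrix.trace, Matrix.diag, Matrix.mul_apply, sq]
      exact Finset.sum_congr rfl fun i _ => Finset.sum_congr rfl fun j _ => by
        rw [hMsym' i j]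
    rw [htr] at htr0
    have hz : ∀ i j, M i j = 0 := by
      intro i j
      have h1 : ∀ i ∈ Finset.univ, (0:ℝ) ≤ ∑ j, M i j ^ 2 := fun i _ =>
        Finset.sum_nonneg fun j _ => sq_nonneg _
      have h2 := (Finset.sum_eq_zero_iff_of_nonneg h1).mp htr0 i (Finset.mem_univ i)
      have h3 := (Finset.sum_eq_zero_iff_of_nonneg
        (fun j _ => sq_nonneg (M i j))).mp h2 j (Finset.mem_univ j)
      exact pow_eq_zero_iff (by norm_num) |>.mp h3
    have hM0 : M = 0 := by ext i j; exact hz i j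
    rw [hM] at hM0
    exact sub_eq_zero.mp hM0
  · intro hfix H _
    have h0 : (N : ℝ) • Ψ - ∑ n, w n • vecMulVec (x n - μ) (x n - μ) = 0 :=
      sub_eq_zero_of_eq hfix
    simpa [h0] using main_deriv ν hν x μ Ψ hΨ w hw' H
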